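/- arXiv:2005.05780 — 2 statements merged into one kernel-verified Lean document; each statement's English description precedes it below -/
import Mathlib

section
/- Let n ≥ 3 be an integer, let a, b, c be nonzero complex numbers, set δ = b(1−n)/(na), and assume c ≠ −(b/(2n))·δ^{n−1}. Then there is no nonzero complex constant A for which the polynomial identity A·(a X^n + b X^{n−1} + c) = a(δ − X)^n + b(δ − X)^{n−1} + c holds in ℂ[X]. Consequently, there is no nonconstant meromorphic function f on ℂ satisfying A·(a f^n + b f^{n−1} + c) ≡ a g^n + b g^{n−1} + c with g = δ − f for some nonzero constant A. -/
open Complex Filter MeasureTheory Metric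
open scoped Classical

/-- The order of a function at a point, as an integer (`0` if not meromorphic or of
order `⊤`, i.e. identically zero near the point). -/
noncomputable def mOrd (f : ℂ → ℂ) (z : ℂ) : ℤ :=
  if h : MeromorphicAt f z then (WithTop.untopD 0 (meromorphicOrderAt f z)) else 0

/-- Multiplicity of `z` as an `α`-point of `f`. -/
noncomputable def zMult (f : ℂ → ℂ) (α z : ℂ) : ℕ :=
  (mOrd (fun w => f w - α) z).toNat

/-- Multiplicity of `z` as a pole of `f`. -/
noncomputable def pMult (f : ℂ → ℂ) (z : ℂ) : ℕ :=
  (-(mOrd f z)).toNat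

/-- Pointwise contribution of `z` to the multiset `E_f(S, k)`:
an `α`-point (`α ∈ S`) of multiplicity `m` counts `m` times if `m ≤ k`, else `k+1` times. -/
noncomputable def Ecount (f : ℂ → ℂ) (S : Set ℂ) (k : ℕ) (z : ℂ) : ℕ :=
  ∑ᶠ α ∈ S, min (zMult f α z) (k + 1)

/-- `f` and `g` share the set `S ⊆ ℂ` with weight `k`, i.e. `E_f(S,k) = E_g(S,k)`. -/
def EshareEq (f g : ℂ → ℂ) (S : Set ℂ) (k : ℕ) : Prop :=
  ∀ z : ℂ, Ecount f S k z = Ecount g S k z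

/-- `f` and `g` share the set `S ⊆ ℂ` counting multiplicities (weight `∞`). -/
def EshareEqCM (f g : ℂ → ℂ) (S : Set ℂ) : Prop :=
  ∀ z : ℂ, (∑ᶠ α ∈ S, zMult f α z) = ∑ᶠ α ∈ S, zMult g α z

/-- `f` and `g` share `{∞}` with weight `k`. -/
def EpoleEq (f g : ℂ → ℂ) (k : ℕ) : Prop :=
  ∀ z : ℂ, min (pMult f z) (k + 1) = min (pMult g z) (k + 1)

/-- `f` and `g` share `{∞}` counting multiplicities. -/
def EpoleEqCM (f g : ℂ → ℂ) : Prop :=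
  ∀ z : ℂ, pMult f z = pMult g z

/-- Equality of meromorphic functions: `f ≡ g`, i.e. `f = g` off a countable set. -/
def MEq (f g : ℂ → ℂ) : Prop :=
  ∃ D : Set ℂ, D.Countable ∧ ∀ z ∉ D, f z = g z

/-- `f` is a nonconstant meromorphic function in the plane. -/
def MNonconst (f : ℂ → ℂ) : Prop :=
  MeromorphicOn f Set.univ ∧ ¬ ∃ c : ℂ, MEq f (fun _ => c)

/-- The unintegrated counting function of a pointwise (multiplicity) count `w`:
number of points in the closed disc of radius `t`, counted with `w`. -/
noncomputable def ncount (w : ℂ → ℕ) (t : ℝ) : ℕ :=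
  ∑ᶠ z ∈ closedBall (0 : ℂ) t, w z

/-- The integrated counting function associated to an unintegrated one. -/
noncomputable def integN (nf : ℝ → ℕ) (r : ℝ) : ℝ :=
  (∫ t in (0:ℝ)..r, ((nf t : ℝ) - (nf 0 : ℝ)) / t) + (nf 0 : ℝ) * Real.log r

/-- The Nevanlinna integrated counting function `N(r, f)` of the poles of `f`. -/
noncomputable def NN (f : ℂ → ℂ) (r : ℝ) : ℝ :=
  integN (ncount (pMult f)) r

/-- The Nevanlinna proximity function `m(r, f)`. -/
noncomputable def mprox (f : ℂ → ℂ) (r : ℝ) : ℝ :=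
  (2 * Real.pi)⁻¹ *
    ∫ θ in (0:ℝ)..(2 * Real.pi), Real.log (max ‖f (r * Complex.exp (θ * Complex.I))‖ 1)

/-- The Nevanlinna characteristic `T(r, f)`. -/
noncomputable def Tchar (f : ℂ → ℂ) (r : ℝ) : ℝ :=
  mprox f r + NN f r

/-- `u` is a quantity of type `S(r, h)` : `u r = o(T(r, h))` as `r → ∞`, outside a
possible exceptional set of finite linear measure. -/
def SmallWrt (h : ℂ → ℂ) (u : ℝ → ℝ) : Prop :=
  ∃ E : Set ℝ, volume E < ⊤ ∧
    Tendsto (fun r => u r / Tchar h r) (atTop ⊓ Filter.principal Eᶜ) (nhds 0)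



open Filter Topology in
/-- Meromorphic dichotomy: frequently zero in a punctured neighborhood implies eventually zero. -/
lemma merom_freq_zero' {f : ℂ → ℂ} {x : ℂ} (hf : MeromorphicAt f x)
    (h : ∃ᶠ z in 𝓝[≠] x, f z = 0) : ∀ᶠ z in 𝓝[≠] x, f z = 0 := by
  obtain ⟨N, hN⟩ := hf
  have hfreq : ∃ᶠ z in 𝓝[≠] x, (fun z => (z - x) ^ N • f z) z = 0 := by
    apply h.mono
    intro z hz
    simp [hz]
  have hev : ∀ᶠ z in 𝓝 x, (z - x) ^ N • f z = 0 :=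
    hN.frequently_zero_iff_eventually_zero.mp hfreq
  rw [eventually_nhdsWithin_iff]
  filter_upwards [hev] with z hz hzx
  have hzx' : z - x ≠ 0 := sub_ne_zero.mpr (by simpa using hzx)
  have h2 := hz
  rw [smul_eq_zero] at h2
  rcases h2 with h' | h'
  · exact absurd h' (pow_ne_zero _ hzx')
  · exact h'

open Filter Topology in
/-- If a meromorphic function on ℂ takes a value `r` frequently near some point,
then it equals `r` off a countable set. -/
lemma eq_const_off_countable' {f : ℂ → ℂ} (hf : MeromorphicOn f Set.univ) {r : ℂ}
    (hfreq : ∃ x : ℂ, ∃ᶠ z in 𝓝[≠] x, f z = r) :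
    {z : ℂ | f z ≠ r}.Countable := by
  have hm : ∀ z : ℂ, MeromorphicAt (fun w => f w - r) z := fun z =>
    (hf z (Set.mem_univ z)).sub (MeromorphicAt.const r z)
  set U : Set ℂ := {z : ℂ | ∀ᶠ w in 𝓝[≠] z, f w = r} with hU
  have hUopen : IsOpen U := by
    rw [isOpen_iff_mem_nhds]
    intro z hz
    rw [hU, Set.mem_setOf_eq, eventually_nhdsWithin_iff, _root_.eventually_nhds_iff] at hz
    obtain ⟨t, ht, htopen, hzt⟩ := hz
    rw [_root_.mem_nhds_iff]
    refine ⟨t, ?_, htopen, hzt⟩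
    intro w hw
    by_cases hwz : w = z
    · subst hwz
      rw [hU, Set.mem_setOf_eq, eventually_nhdsWithin_iff, _root_.eventually_nhds_iff]
      exact ⟨t, ht, htopen, hzt⟩
    · rw [hU, Set.mem_setOf_eq]
      apply eventually_nhdsWithin_of_eventually_nhds
      rw [_root_.eventually_nhds_iff]
      exact ⟨t \ {z}, fun u hu => ht u hu.1 (by simpa using hu.2), htopen.sdiff isClosed_singleton,
        ⟨hw, by simpa using hwz⟩⟩
  have hUcopen : IsOpen Uᶜ := by
    rw [isOpen_iff_mem_nhds]
    intro z hz
    have hz' : ¬ ∀ᶠ w in 𝓝[≠] z, f w = r := hz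
    have hne : ∀ᶠ w in 𝓝[≠] z, f w ≠ r := by
      rw [← Filter.not_frequently]
      intro hfr
      exact hz' ((merom_freq_zero' (hm z)
        (hfr.mono fun w hw => sub_eq_zero.mpr hw)).mono fun w hw => sub_eq_zero.mp hw)
    rw [eventually_nhdsWithin_iff, _root_.eventually_nhds_iff] at hne
    obtain ⟨t, ht, htopen, hzt⟩ := hne
    rw [_root_.mem_nhds_iff]
    refine ⟨t, ?_, htopen, hzt⟩
    intro w hw hwU
    by_cases hwz : w = z
    · exact hz (hwz ▸ hwU)
    · have h1 : ∀ᶠ u in 𝓝[≠] w, f u ≠ r := by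
        apply eventually_nhdsWithin_of_eventually_nhds
        rw [_root_.eventually_nhds_iff]
        exact ⟨t \ {z}, fun u hu => ht u hu.1 (by simpa using hu.2),
          htopen.sdiff isClosed_singleton, hw, by simpa using hwz⟩
      have h2 : ∀ᶠ u in 𝓝[≠] w, f u = r := hwU
      have h3 : ∀ᶠ u in 𝓝[≠] w, False := by
        filter_upwards [h1, h2] with u hu1 hu2; exact hu1 hu2
      exact (h3.exists).elim (fun _ h => h)
  obtain ⟨x, hx⟩ := hfreq
  have hxU : x ∈ U :=
    (merom_freq_zero' (hm x) (hx.mono fun w hw => sub_eq_zero.mpr hw)).mono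
      fun w hw => sub_eq_zero.mp hw
  have hUuniv : U = Set.univ :=
    IsClopen.eq_univ ⟨isOpen_compl_iff.mp hUcopen, hUopen⟩ ⟨x, hxU⟩
  set S : Set ℂ := {z : ℂ | f z ≠ r} with hS
  haveI : DiscreteTopology S := by
    rw [discreteTopology_subtype_iff]
    intro z hzS
    have hzU : z ∈ U := hUuniv ▸ Set.mem_univ z
    rw [inf_principal_eq_bot]
    apply Filter.mem_of_superset hzU
    intro w hw
    simp only [Set.mem_compl_iff, hS, Set.mem_setOf_eq, not_not]
    exact hw
  have : Countable S := (TopologicalSpace.separableSpace_iff_countable).mp inferInstance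
  exact Set.countable_coe_iff.mp this


open Polynomial in
/-- Nonexistence of the degenerate relation in Subcases 2.2.1–2.2.3: if
`c ≠ -(b/(2n)) δⁿ⁻¹` with `δ = b(1-n)/(na)`, there is no nonzero constant `A` with
`A (a Xⁿ + b Xⁿ⁻¹ + c) = a (δ-X)ⁿ + b (δ-X)ⁿ⁻¹ + c` as polynomials, and consequently
no nonconstant meromorphic `f` satisfying `A(a fⁿ + b fⁿ⁻¹ + c) ≡ a gⁿ + b gⁿ⁻¹ + c`
with `g = δ - f`. -/
theorem no_degenerate_relation
    (n : ℕ) (hn : 3 ≤ n) (a b c : ℂ) (ha : a ≠ 0) (hb : b ≠ 0) (hc : c ≠ 0)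
    (δ : ℂ) (hδ : δ = b * (1 - (n : ℂ)) / ((n : ℂ) * a))
    (hcrit : c ≠ -(b / (2 * (n : ℂ))) * δ ^ (n - 1)) :
    (¬ ∃ A : ℂ, A ≠ 0 ∧
        C A * (C a * X ^ n + C b * X ^ (n - 1) + C c)
          = C a * (C δ - X) ^ n + C b * (C δ - X) ^ (n - 1) + C c) ∧
      (¬ ∃ A : ℂ, A ≠ 0 ∧ ∃ f : ℂ → ℂ, MNonconst f ∧
        MEq (fun z => A * (a * f z ^ n + b * f z ^ (n - 1) + c))
          (fun z => a * (δ - f z) ^ n + b * (δ - f z) ^ (n - 1) + c)) := by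
  have hpart1 : ¬ ∃ A : ℂ, A ≠ 0 ∧
      C A * (C a * X ^ n + C b * X ^ (n - 1) + C c)
        = C a * (C δ - X) ^ n + C b * (C δ - X) ^ (n - 1) + C c := by
    rintro ⟨A, hA, heq⟩
    have hn0 : ((n:ℂ)) ≠ 0 := Nat.cast_ne_zero.mpr (by omega)
    have hrw : (C δ - X : ℂ[X]) = C (-1 : ℂ) * (X + C (-δ)) := by
      simp [map_neg]; ring
    rw [hrw, mul_pow, mul_pow, ← C_pow, ← C_pow] at heq
    have h1 := congrArg (fun p => Polynomial.coeff p n) heq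
    have h2 := congrArg (fun p => Polynomial.coeff p (n-1)) heq
    have h3 := congrArg (fun p => Polynomial.coeff p 0) heq
    have e1 : ¬ (n = n - 1) := by omega
    have e2 : ¬ (n - 1 = n) := by omega
    have e3 : n ≠ 0 := by omega
    have e4 : n - 1 ≠ 0 := by omega
    have e5 : n - (n-1) = 1 := by omega
    have e6 : n.choose (n-1) = n := by
      rw [← Nat.choose_symm (by omega : n - 1 ≤ n)]
      simp [e5]
    simp only [coeff_add, coeff_C_mul, coeff_X_pow, coeff_X_add_C_pow, coeff_C,
      if_pos rfl, if_neg e1, if_neg e2, if_neg e3, if_neg e4, e5, e6, Nat.sub_self,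
      Nat.choose_self, Nat.choose_zero_right, Nat.sub_zero] at h1 h2 h3
    have e7 : n - 1 - n = 0 := by omega
    have e8 : (n-1).choose n = 0 := Nat.choose_eq_zero_of_lt (by omega)
    have e9 : ¬ (0 = n) := by omega
    have e10 : ¬ (0 = n - 1) := by omega
    simp only [e7, e8, if_neg e9, if_neg e10, if_pos trivial, pow_zero, Nat.cast_zero,
      Nat.cast_one, mul_zero, zero_mul, mul_one, one_mul, add_zero, zero_add, mul_comm] at h1 h2 h3
    set s : ℂ := (-1)^n with hs
    have hs' : ((-1:ℂ))^(n-1) = -s := by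
      have h4 : s = (-1:ℂ)^(n-1) * (-1) := by rw [hs, ← pow_succ]; congr 1; omega
      rw [h4]; ring
    have hsne : s ≠ 0 := pow_ne_zero _ (by norm_num)
    have hA1 : A = s := by
      field_simp at h1
      simp [h1]
    rw [hA1, hs'] at h2 h3
    have key : (n:ℂ) * a * δ = -2 * b := by
      have h2' : s * b = s * (-(a * δ * n) - b) := by linear_combination h2
      have h2'' := mul_left_cancel₀ hsne h2'
      linear_combination h2''
    have hδ2 : δ * ((n:ℂ) * a) = b * (1 - n) := by
      rw [hδ]; field_simp
    have hn3 : n = 3 := by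
      have hb3 : b * (3 - (n:ℂ)) = 0 := by linear_combination key - hδ2
      rcases mul_eq_zero.mp hb3 with h | h
      · exact absurd h hb
      · have h5 : ((n:ℂ)) = 3 := by linear_combination -h
        exact_mod_cast h5
    subst hn3
    have hs3 : s = -1 := by norm_num [hs]
    rw [hs3] at h3
    push_cast at hδ2
    apply hcrit
    norm_num
    linear_combination (-1/2 : ℂ) * h3 - (δ^2/6) * hδ2
  refine ⟨hpart1, ?_⟩
  rintro ⟨A, hA, f, hfnc, D, hDcount, hfeq⟩
  obtain ⟨hmero, hnc⟩ := hfnc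
  set P : ℂ[X] := C A * (C a * X ^ n + C b * X ^ (n-1) + C c)
      - (C a * (C δ - X) ^ n + C b * (C δ - X) ^ (n-1) + C c) with hP
  have hPne : P ≠ 0 := by
    intro h0
    exact hpart1 ⟨A, hA, by rwa [← sub_eq_zero]⟩
  have hroots := Polynomial.finite_setOf_isRoot hPne
  have hmem : ∀ z ∉ D, f z ∈ {x | P.IsRoot x} := by
    intro z hz
    have h := hfeq z hz
    simp only [Set.mem_setOf_eq, Polynomial.IsRoot, hP, Polynomial.eval_sub, Polynomial.eval_mul,
      Polynomial.eval_add, Polynomial.eval_pow, Polynomial.eval_C, Polynomial.eval_X]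
    rw [sub_eq_zero]
    simpa using h
  haveI : Uncountable ℂ := Complex.ofReal_injective.uncountable
  have hDc : ¬ (Dᶜ : Set ℂ).Countable := by
    intro h
    exact Set.not_countable_univ (by simpa [Set.union_compl_self] using hDcount.union h)
  have hex : ∃ r ∈ {x | P.IsRoot x}, ¬ (Dᶜ ∩ f ⁻¹' {r}).Countable := by
    by_contra hcon
    push_neg at hcon
    apply hDc
    have hsub : Dᶜ ⊆ ⋃ r ∈ {x | P.IsRoot x}, (Dᶜ ∩ f ⁻¹' {r}) := by
      intro z hz
      exact Set.mem_biUnion (hmem z hz) ⟨hz, rfl⟩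
    exact (Set.Countable.biUnion hroots.countable fun r hr => hcon r hr).mono hsub
  obtain ⟨r, -, hTunc⟩ := hex
  set T : Set ℂ := Dᶜ ∩ f ⁻¹' {r} with hT
  have hball : ∃ m : ℕ, (T ∩ Metric.closedBall 0 m).Infinite := by
    by_contra hcon
    push_neg at hcon
    apply hTunc
    have hsub : T ⊆ ⋃ m : ℕ, (T ∩ Metric.closedBall 0 m) := by
      intro z hz
      obtain ⟨m, hm⟩ := exists_nat_ge ‖z‖
      exact Set.mem_iUnion.mpr ⟨m, hz, by simpa [Metric.mem_closedBall, Complex.dist_eq] using hm⟩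
    exact (Set.countable_iUnion fun m => (hcon m).countable).mono hsub
  obtain ⟨m, hm⟩ := hball
  obtain ⟨x, -, hxacc⟩ := hm.exists_accPt_of_subset_isCompact
    (isCompact_closedBall (0:ℂ) m) Set.inter_subset_right
  rw [accPt_iff_frequently] at hxacc
  have hfx : ∃ᶠ z in nhdsWithin x {x}ᶜ, f z = r := by
    rw [frequently_nhdsWithin_iff]
    apply hxacc.mono
    rintro y ⟨hyx, hyT, -⟩
    exact ⟨hyT.2, hyx⟩
  have hcount := eq_const_off_countable' hmero ⟨x, hfx⟩
  exact hnc ⟨r, {z | f z ≠ r}, hcount, fun z hz => not_not.mp hz⟩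
end

section
/- Let a = 1, b = 3, n = 3, c = −2 (so that c = −(b/(2n))·δ^{n−1} with δ = b(1−n)/(na) = −2). Set S₁ = {0, −2}, S₂ = {z ∈ ℂ : z³ + 3z² − 2 = 0} = {−1, −1−√3, −1+√3} and S₃ = {∞}. Then for every nonconstant meromorphic function φ on ℂ, the functions f = φ − 2 and g = −φ satisfy E_f(S_j, ∞) = E_g(S_j, ∞) for j = 1, 2, 3 (in particular E_f(S₁, 0) = E_g(S₁, 0), E_f(S₂, 3) = E_g(S₂, 3), E_f(S₃, 1) = E_g(S₃, 1)), yet f ≢ g. Hence the hypothesis c ≠ −(b/(2n))·δ^{n−1} in the three-set uniqueness theorem cannot be dropped. -/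
open Complex Filter MeasureTheory Metric
open scoped Classical

section Aux

lemma ord_fun_congr {f g : ℂ → ℂ} {x : ℂ} (h : f = g) (hf : MeromorphicAt f x)
    (hg : MeromorphicAt g x) : meromorphicOrderAt f x = meromorphicOrderAt g x := by subst h; rfl

lemma ord_const {c : ℂ} (hc : c ≠ 0) (x : ℂ) : meromorphicOrderAt (fun _ => c) x = 0 := by
  have : ((0 : ℤ) : WithTop ℤ) = (0 : WithTop ℤ) := rfl
  rw [← this, meromorphicOrderAt_eq_int_iff (MeromorphicAt.const c x)]
  exact ⟨fun _ => c, analyticAt_const, hc, by filter_upwards with z; simp⟩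

lemma ord_neg {f : ℂ → ℂ} {x : ℂ} (hf : MeromorphicAt f x) :
    meromorphicOrderAt (-f) x = meromorphicOrderAt f x :=
  meromorphicOrderAt_neg.symm

lemma ord_add_lt {f g : ℂ → ℂ} {x : ℂ} (hf : MeromorphicAt f x) (hg : MeromorphicAt g x)
    (hlt : meromorphicOrderAt f x < meromorphicOrderAt g x) :
    meromorphicOrderAt (f + g) x = meromorphicOrderAt f x :=
  meromorphicOrderAt_add_eq_left_of_lt hg hlt

lemma mOrd_neg (h : ℂ → ℂ) (z : ℂ) : mOrd (fun w => -(h w)) z = mOrd h z := by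
  by_cases hm : MeromorphicAt h z
  · have hm' : MeromorphicAt (fun w => -(h w)) z := hm.neg
    rw [mOrd, dif_pos hm', mOrd, dif_pos hm]
    have : meromorphicOrderAt (fun w => -(h w)) z = meromorphicOrderAt h z := (ord_fun_congr rfl hm' hm.neg).trans (ord_neg hm)
    rw [this]
  · have hm' : ¬ MeromorphicAt (fun w => -(h w)) z := by
      intro h'
      apply hm
      have := h'.neg
      have heq : (-fun w => -(h w)) = h := by funext w; simp
      rwa [heq] at this
    rw [mOrd, dif_neg hm', mOrd, dif_neg hm]

lemma pMult_eq {f : ℂ → ℂ} {z : ℂ} (hf : MeromorphicAt f z) :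
    pMult f z = (-(WithTop.untopD 0 (meromorphicOrderAt f z))).toNat := by
  rw [pMult, mOrd, dif_pos hf]

lemma pMult_neg (φ : ℂ → ℂ) (z : ℂ) : pMult (fun w => -(φ w)) z = pMult φ z := by
  rw [pMult, mOrd_neg, pMult]

lemma pMult_sub_const (φ : ℂ → ℂ) (z : ℂ) {c : ℂ} (hc : c ≠ 0) (hm : MeromorphicAt φ z) :
    pMult (fun w => φ w - c) z = pMult φ z := by
  have hC : MeromorphicAt (fun _ : ℂ => -c) z := .const _ _
  have hEq : (fun w => φ w - c) = (φ + fun _ => -c) := by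
    funext w; simp [sub_eq_add_neg]
  rw [hEq]
  have hCo : meromorphicOrderAt (fun _ : ℂ => -c) z = 0 :=
    (ord_fun_congr rfl hC (MeromorphicAt.const (-c) z)).trans (ord_const (neg_ne_zero.mpr hc) z)
  rcases lt_or_ge (meromorphicOrderAt φ z) 0 with h | h
  · have key : meromorphicOrderAt (φ + fun _ => -c) z = meromorphicOrderAt φ z := ord_add_lt hm hC (by rw [hCo]; exact h)
    rw [pMult_eq (hm.add hC), pMult_eq hm, key]
  · have h2 : 0 ≤ meromorphicOrderAt (φ + fun _ => -c) z := by
      by_contra h'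
      push_neg at h'
      have hC2 : MeromorphicAt (fun _ : ℂ => c) z := .const _ _
      have hC2o : meromorphicOrderAt (fun _ : ℂ => c) z = 0 :=
        (ord_fun_congr rfl hC2 (MeromorphicAt.const c z)).trans (ord_const hc z)
      have key : meromorphicOrderAt ((φ + fun _ => -c) + fun _ => c) z = meromorphicOrderAt (φ + fun _ => -c) z :=
        ord_add_lt (hm.add hC) hC2 (by rw [hC2o]; exact h')
      have hEq2 : ((φ + fun _ => -c) + fun _ => c) = φ := by funext w; simp
      have : meromorphicOrderAt φ z = meromorphicOrderAt (φ + fun _ => -c) z :=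
        (ord_fun_congr hEq2.symm hm ((hm.add hC).add hC2)).trans key
      rw [this] at h
      exact absurd h' (not_lt.mpr h)
    have u1 : 0 ≤ WithTop.untopD 0 (meromorphicOrderAt (φ + fun _ => -c) z) := by
      cases h' : meromorphicOrderAt (φ + fun _ => -c) z with
      | top => simp
      | coe n => rw [h'] at h2; simpa using h2
    have u2 : 0 ≤ WithTop.untopD 0 (meromorphicOrderAt φ z) := by
      cases h' : meromorphicOrderAt φ z with
      | top => simp
      | coe n => rw [h'] at h; simpa using h
    rw [pMult_eq (hm.add hC), pMult_eq hm]
    omega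

lemma zMult_shift (φ : ℂ → ℂ) (α z : ℂ) :
    zMult (fun w => φ w - 2) α z = zMult φ (2 + α) z := by
  have hEq : (fun w => φ w - 2 - α) = (fun w => φ w - (2 + α)) := by funext w; ring
  show (mOrd (fun w => φ w - 2 - α) z).toNat = (mOrd (fun w => φ w - (2 + α)) z).toNat
  rw [hEq]

lemma zMult_neg' (φ : ℂ → ℂ) (β z : ℂ) :
    zMult (fun w => -(φ w)) β z = zMult φ (-β) z := by
  have hEq : (fun w => -(φ w) - β) = (fun w => -(φ w - (-β))) := by funext w; ring
  show (mOrd (fun w => -(φ w) - β) z).toNat = (mOrd (fun w => φ w - (-β)) z).toNat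
  rw [hEq, mOrd_neg (fun w => φ w - (-β))]

lemma reindex_sum (w : ℂ → ℕ) (S : Set ℂ)
    (hS : (fun α => (2:ℂ) + α) '' S = (fun α : ℂ => -α) '' S) :
    ∑ᶠ α ∈ S, w (2 + α) = ∑ᶠ α ∈ S, w (-α) := by
  have h1 := finsum_mem_image (f := w) (s := S) (g := fun α => (2:ℂ) + α)
    (fun a _ b _ h => by simpa using h)
  have h2 := finsum_mem_image (f := w) (s := S) (g := fun α : ℂ => -α)
    (fun a _ b _ h => by simpa using h)
  rw [← h1, ← h2, hS]

lemma main_reindex (φ : ℂ → ℂ) (S : Set ℂ)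
    (hS : (fun α => (2:ℂ) + α) '' S = (fun α : ℂ => -α) '' S) (u : ℕ → ℕ) (z : ℂ) :
    ∑ᶠ α ∈ S, u (zMult (fun w => φ w - 2) α z) = ∑ᶠ α ∈ S, u (zMult (fun w => -(φ w)) α z) :=
  calc ∑ᶠ α ∈ S, u (zMult (fun w => φ w - 2) α z)
      = ∑ᶠ α ∈ S, (fun β => u (zMult φ β z)) (2 + α) :=
        finsum_mem_congr rfl (fun α _ => by rw [zMult_shift])
    _ = ∑ᶠ α ∈ S, (fun β => u (zMult φ β z)) (-α) :=
        reindex_sum (fun β => u (zMult φ β z)) S hS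
    _ = ∑ᶠ α ∈ S, u (zMult (fun w => -(φ w)) α z) :=
        finsum_mem_congr rfl (fun α _ => by rw [zMult_neg'])

lemma hS1 : (fun α => (2:ℂ) + α) '' {0, -2} = (fun α : ℂ => -α) '' {0, -2} := by
  rw [Set.image_pair, Set.image_pair]
  norm_num
  exact Set.pair_comm 2 0

lemma hS2 : (fun α => (2:ℂ) + α) '' {z : ℂ | z ^ 3 + 3 * z ^ 2 - 2 = 0}
    = (fun α : ℂ => -α) '' {z : ℂ | z ^ 3 + 3 * z ^ 2 - 2 = 0} := by
  ext w
  simp only [Set.mem_image, Set.mem_setOf_eq]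
  constructor
  · rintro ⟨z, hz, rfl⟩
    exact ⟨-(2 + z), by linear_combination -hz, by ring⟩
  · rintro ⟨z, hz, rfl⟩
    exact ⟨-z - 2, by linear_combination -hz, by ring⟩

end Aux

/-- **Example 1.1.** For `a = 1`, `b = 3`, `n = 3`, `c = -2` (so `c = -(b/(2n)) δⁿ⁻¹`),
with `S₁ = {0, -2}`, `S₂ = {z : z³ + 3z² - 2 = 0} = {-1, -1-√3, -1+√3}`, `S₃ = {∞}`,
the functions `f = φ - 2` and `g = -φ` share each `Sⱼ` counting multiplicities (hence
with weights `(0, 3, 1)`) for every nonconstant meromorphic `φ`, yet `f ≢ g`. -/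
theorem example_critical_c_sharp :
    ({z : ℂ | z ^ 3 + 3 * z ^ 2 - 2 = 0}
        = {-1, -1 - (Real.sqrt 3 : ℂ), -1 + (Real.sqrt 3 : ℂ)}) ∧
      ∀ φ : ℂ → ℂ, MNonconst φ →
        EshareEqCM (fun z => φ z - 2) (fun z => -φ z) {0, -2} ∧
        EshareEqCM (fun z => φ z - 2) (fun z => -φ z)
          {z : ℂ | z ^ 3 + 3 * z ^ 2 - 2 = 0} ∧
        EpoleEqCM (fun z => φ z - 2) (fun z => -φ z) ∧
        EshareEq (fun z => φ z - 2) (fun z => -φ z) {0, -2} 0 ∧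
        EshareEq (fun z => φ z - 2) (fun z => -φ z)
          {z : ℂ | z ^ 3 + 3 * z ^ 2 - 2 = 0} 3 ∧
        EpoleEq (fun z => φ z - 2) (fun z => -φ z) 1 ∧
        ¬ MEq (fun z => φ z - 2) (fun z => -φ z) := by
  constructor
  · have hs : ((Real.sqrt 3 : ℝ) : ℂ) ^ 2 = 3 := by
      rw [← Complex.ofReal_pow, Real.sq_sqrt (by norm_num : (0:ℝ) ≤ 3)]
      norm_num
    ext z
    simp only [Set.mem_setOf_eq, Set.mem_insert_iff, Set.mem_singleton_iff]
    set s : ℂ := ((Real.sqrt 3 : ℝ) : ℂ)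
    have key : z ^ 3 + 3 * z ^ 2 - 2 = (z + 1) * ((z + 1 - s) * (z + 1 + s)) := by
      linear_combination (z + 1) * hs
    rw [key, mul_eq_zero, mul_eq_zero]
    constructor
    · rintro (h | h | h)
      · left; linear_combination h
      · right; right; linear_combination h
      · right; left; linear_combination h
    · rintro (h | h | h)
      · left; linear_combination h
      · right; right; linear_combination h
      · right; left; linear_combination h
  · intro φ hφ
    have hmer : ∀ z : ℂ, MeromorphicAt φ z := fun z => hφ.1 z (Set.mem_univ z)
    have hpole : EpoleEqCM (fun z => φ z - 2) (fun z => -φ z) := by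
      intro z
      rw [pMult_neg φ z, pMult_sub_const φ z (by norm_num : (2:ℂ) ≠ 0) (hmer z)]
    refine ⟨?_, ?_, hpole, ?_, ?_, ?_, ?_⟩
    · exact fun z => main_reindex φ _ hS1 id z
    · exact fun z => main_reindex φ _ hS2 id z
    · exact fun z => main_reindex φ _ hS1 (fun m => min m (0 + 1)) z
    · exact fun z => main_reindex φ _ hS2 (fun m => min m (3 + 1)) z
    · intro z; rw [hpole z]
    · rintro ⟨D, hD, hDeq⟩
      apply hφ.2
      refine ⟨1, D, hD, fun z hz => ?_⟩
      have h : φ z - 2 = -φ z := hDeq z hz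
      show φ z = 1
      linear_combination h / 2
end
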